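/- Fix an integer n ≥ 3. There do not exist real constants c_0, c_1, c_2, c_3 (allowed to depend on n) such that the identity φ_ijk = c_0 + c_1·φ_ij + c_2·φ_ik + c_3·φ_jk holds for every population size N ≥ 1, every neutral replacement rule satisfying the fixation axiom, every mutation probability u with 0 < u ≤ 1, and all sites i, j, k ∈ {1,…,N} (not necessarily distinct), where φ and the triple probabilities are computed under the unique neutral stationary distribution π°. -/

import Mathlib

open Finset

namespace SCT

abbrev Event (N : ℕ) := Finset (Fin N) × (Fin N → Fin N)

/-- The extension `α̃` of the parentage map of a replacement event:
it equals `α` on `R` and the identity off `R`. -/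
def extMap {N : ℕ} (E : Event N) : Fin N → Fin N :=
  fun i => if i ∈ E.1 then E.2 i else i

/-- Transition probabilities of the mutation–selection Markov chain on states
`Fin N → Fin n`, for a replacement rule `p` and mutation probability `u`. -/
noncomputable def transMat (N n : ℕ) (p : Event N → ℝ) (u : ℝ)
    (x y : Fin N → Fin n) : ℝ :=
  ∑ E : Event N, p E *
    (∏ i ∈ E.1, ((1 - u) * (if y i = x (E.2 i) then (1:ℝ) else 0) + u / (n:ℝ))) *
    (∏ i ∈ E.1ᶜ, (if y i = x i then (1:ℝ) else 0))

def IsDist {α : Type*} [Fintype α] (q : α → ℝ) : Prop :=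
  (∀ a, 0 ≤ q a) ∧ ∑ a, q a = 1

def IsStationary {N n : ℕ} (P : (Fin N → Fin n) → (Fin N → Fin n) → ℝ)
    (π : (Fin N → Fin n) → ℝ) : Prop :=
  IsDist π ∧ ∀ y, ∑ x, π x * P x y = π y

/-- Fixation axiom: some site `i` can propagate its lineage through the whole
population via finitely many replacement events of positive probability. -/
def FixationAxiom {N : ℕ} (p : Event N → ℝ) : Prop :=
  ∃ (i : Fin N) (m : ℕ) (E : Fin m → Event N), 1 ≤ m ∧
    (∀ k, 0 < p (E k)) ∧ (∃ k, i ∈ (E k).1) ∧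
    ∀ j, ((List.ofFn (fun k => extMap (E k))).foldr (· ∘ ·) id) j = i

/-- Pairwise identity-by-state probability under the distribution `π`. -/
noncomputable def phi2 {N n : ℕ} (π : (Fin N → Fin n) → ℝ) (i j : Fin N) : ℝ :=
  ∑ x, π x * (if x i = x j then (1:ℝ) else 0)

/-- Triple identity-by-state probability under the distribution `π`. -/
noncomputable def phi3 {N n : ℕ} (π : (Fin N → Fin n) → ℝ) (i j k : Fin N) : ℝ :=
  ∑ x, π x * (if x i = x j ∧ x j = x k then (1:ℝ) else 0)

/-! ### Auxiliary construction: the pure-resampling model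

The replacement rule that with probability one replaces every site with the
offspring of site `0`, run at mutation rate `u = 1`, has the uniform
distribution as its unique stationary distribution. -/

/-- The point mass on the replacement event `(univ, const 0)`. -/
def pstar (N : ℕ) [NeZero N] : Event N → ℝ :=
  fun E => if E = ((Finset.univ : Finset (Fin N)), fun _ => (0 : Fin N)) then 1 else 0

lemma pstar_isDist (N : ℕ) [NeZero N] : IsDist (pstar N) := by
  constructor
  · intro a; unfold pstar; split <;> norm_num
  · unfold pstar
    rw [Finset.sum_ite_eq' Finset.univ]
    simp

lemma pstar_fix (N : ℕ) [NeZero N] : FixationAxiom (pstar N) := by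
  refine ⟨0, 1, fun _ => ((Finset.univ : Finset (Fin N)), fun _ => (0 : Fin N)),
    le_refl 1, fun k => ?_, ⟨0, Finset.mem_univ _⟩, fun j => ?_⟩
  · unfold pstar; simp
  · simp [List.ofFn_succ, extMap]

lemma transMat_pstar (N n : ℕ) [NeZero N] (x y : Fin N → Fin n) :
    transMat N n (pstar N) 1 x y = (1 / (n:ℝ)) ^ N := by
  unfold transMat pstar
  rw [Finset.sum_eq_single ((Finset.univ : Finset (Fin N)), fun _ => (0 : Fin N))]
  · simp [Finset.prod_const]
  · intro E _ hE; simp [hE]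
  · simp

/-- The uniform distribution on states. -/
noncomputable def unif (N n : ℕ) : (Fin N → Fin n) → ℝ := fun _ => (1 / (n:ℝ)) ^ N

lemma unif_isDist (N n : ℕ) (hn : 0 < n) : IsDist (unif N n) := by
  constructor
  · intro a; unfold unif; positivity
  · unfold unif
    rw [Finset.sum_const, Finset.card_univ, Fintype.card_fun, Fintype.card_fin,
      Fintype.card_fin, nsmul_eq_mul]
    have : (n:ℝ) ≠ 0 := Nat.cast_ne_zero.mpr hn.ne'
    push_cast
    rw [← mul_pow]
    field_simp
    rw [one_pow]

lemma unif_stationary (N n : ℕ) [NeZero N] (hn : 0 < n) :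
    IsStationary (transMat N n (pstar N) 1) (unif N n) := by
  refine ⟨unif_isDist N n hn, fun y => ?_⟩
  have := (unif_isDist N n hn).2
  calc ∑ x, unif N n x * transMat N n (pstar N) 1 x y
      = ∑ x : Fin N → Fin n, unif N n x * (1/(n:ℝ))^N := by
        refine Finset.sum_congr rfl fun x _ => by rw [transMat_pstar]
    _ = (∑ x, unif N n x) * (1/(n:ℝ))^N := by rw [Finset.sum_mul]
    _ = unif N n y := by rw [this, one_mul]; rfl

lemma unif_unique (N n : ℕ) [NeZero N]
    (π' : (Fin N → Fin n) → ℝ) (h : IsStationary (transMat N n (pstar N) 1) π') :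
    π' = unif N n := by
  funext y
  have h2 := h.2 y
  have : ∑ x, π' x * transMat N n (pstar N) 1 x y = (1/(n:ℝ))^N := by
    calc ∑ x, π' x * transMat N n (pstar N) 1 x y
        = ∑ x, π' x * (1/(n:ℝ))^N := by
          refine Finset.sum_congr rfl fun x _ => by rw [transMat_pstar]
      _ = (∑ x, π' x) * (1/(n:ℝ))^N := by rw [Finset.sum_mul]
      _ = (1/(n:ℝ))^N := by rw [h.1.2, one_mul]
  rw [this] at h2
  exact h2.symm

/-! ### Summation over small state spaces -/

lemma sumSucc {N n : ℕ} (f : (Fin (N+1) → Fin n) → ℝ) :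
    ∑ x, f x = ∑ a : Fin n, ∑ y : Fin N → Fin n, f (Fin.cons a y) := by
  rw [Fintype.sum_equiv (Fin.consEquiv (fun _ => Fin n)).symm f (fun p => f (Fin.cons p.1 p.2))
    (fun x => by simp [Fin.consEquiv]), Fintype.sum_prod_type]

lemma sum1 {n : ℕ} (f : (Fin 1 → Fin n) → ℝ) :
    ∑ x, f x = ∑ a : Fin n, f ![a] := by
  rw [sumSucc]
  refine Finset.sum_congr rfl fun a _ => ?_
  rw [Fintype.sum_unique]
  congr 1

lemma sum2 {n : ℕ} (f : (Fin 2 → Fin n) → ℝ) :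
    ∑ x, f x = ∑ a : Fin n, ∑ b : Fin n, f ![a, b] := by
  rw [sumSucc]
  exact Finset.sum_congr rfl fun a _ => sum1 (fun y => f (Fin.cons a y))

lemma sum3 {n : ℕ} (f : (Fin 3 → Fin n) → ℝ) :
    ∑ x, f x = ∑ a : Fin n, ∑ b : Fin n, ∑ c : Fin n, f ![a, b, c] := by
  rw [sumSucc]
  exact Finset.sum_congr rfl fun a _ => sum2 (fun y => f (Fin.cons a y))

/-! ### General identities for `phi2` and `phi3` -/

lemma phi2_self {N n : ℕ} (π : (Fin N → Fin n) → ℝ) (h : IsDist π) (i : Fin N) :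
    phi2 π i i = 1 := by simp [phi2, h.2]

lemma phi2_symm {N n : ℕ} (π : (Fin N → Fin n) → ℝ) (i j : Fin N) :
    phi2 π i j = phi2 π j i := by
  unfold phi2
  refine Finset.sum_congr rfl fun x _ => ?_
  congr 1
  simp [eq_comm]

lemma phi3_iik {N n : ℕ} (π : (Fin N → Fin n) → ℝ) (i k : Fin N) :
    phi3 π i i k = phi2 π i k := by simp [phi3, phi2]

lemma phi3_iji {N n : ℕ} (π : (Fin N → Fin n) → ℝ) (i j : Fin N) :
    phi3 π i j i = phi2 π i j := by
  unfold phi3 phi2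
  refine Finset.sum_congr rfl fun x _ => ?_
  congr 1
  by_cases h : x i = x j <;> simp [h, eq_comm]

lemma phi3_ijj {N n : ℕ} (π : (Fin N → Fin n) → ℝ) (i j : Fin N) :
    phi3 π i j j = phi2 π i j := by simp [phi3, phi2]

/-! ### Values of `phi2` and `phi3` under the uniform distribution -/

lemma phi2_unif2 {n : ℕ} (hn : 0 < n) : phi2 (unif 2 n) 0 1 = 1/(n:ℝ) := by
  have hn' : (n:ℝ) ≠ 0 := Nat.cast_ne_zero.mpr hn.ne'
  unfold phi2 unif
  rw [sum2]
  simp [Finset.sum_ite_eq, mul_ite]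
  field_simp

lemma phi2_unif3 {n : ℕ} (hn : 0 < n) (i j : Fin 3) (hij : i ≠ j) :
    phi2 (unif 3 n) i j = 1/(n:ℝ) := by
  have hn' : (n:ℝ) ≠ 0 := Nat.cast_ne_zero.mpr hn.ne'
  unfold phi2 unif
  rw [sum3]
  simp only [mul_ite, mul_one, mul_zero]
  fin_cases i <;> fin_cases j <;> simp_all <;>
    simp [Finset.sum_ite_eq, Finset.sum_ite_eq', mul_ite, eq_comm] <;>
    field_simp <;> ring

lemma phi3_unif3 {n : ℕ} (hn : 0 < n) : phi3 (unif 3 n) 0 1 2 = 1/(n:ℝ)^2 := by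
  have hn' : (n:ℝ) ≠ 0 := Nat.cast_ne_zero.mpr hn.ne'
  unfold phi3 unif
  rw [sum3]
  simp only [ite_and, mul_ite, mul_one, mul_zero]
  simp [ite_and, Finset.sum_ite_eq, mul_ite]
  field_simp

/-- For `n ≥ 3` strategies there is no universal affine expression of the
triple identity-by-state probability in terms of the pairwise ones. -/
theorem stmt3 (n : ℕ) (hn : 3 ≤ n) :
    ¬ ∃ c0 c1 c2 c3 : ℝ,
        ∀ (N : ℕ), 1 ≤ N →
        ∀ p : Event N → ℝ, IsDist p → FixationAxiom p →
        ∀ u : ℝ, 0 < u → u ≤ 1 →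
        ∀ π : (Fin N → Fin n) → ℝ,
          IsStationary (transMat N n p u) π →
          (∀ π', IsStationary (transMat N n p u) π' → π' = π) →
        ∀ i j k : Fin N,
          phi3 π i j k =
            c0 + c1 * phi2 π i j + c2 * phi2 π i k + c3 * phi2 π j k := by
  rintro ⟨c0, c1, c2, c3, h⟩
  have hn0 : 0 < n := by omega
  have hn' : (n:ℝ) ≠ 0 := Nat.cast_ne_zero.mpr hn0.ne'
  have ht : (3:ℝ) ≤ (n:ℝ) := by exact_mod_cast hn
  set t : ℝ := (n:ℝ) with hdef
  -- instantiate the universal statement at population sizes 1, 2, 3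
  have h1 := h 1 (by norm_num) (pstar 1) (pstar_isDist 1) (pstar_fix 1) 1 one_pos le_rfl
    (unif 1 n) (unif_stationary 1 n hn0) (fun π' hp => unif_unique 1 n π' hp)
  have h2 := h 2 (by norm_num) (pstar 2) (pstar_isDist 2) (pstar_fix 2) 1 one_pos le_rfl
    (unif 2 n) (unif_stationary 2 n hn0) (fun π' hp => unif_unique 2 n π' hp)
  have h3 := h 3 (by norm_num) (pstar 3) (pstar_isDist 3) (pstar_fix 3) 1 one_pos le_rfl
    (unif 3 n) (unif_stationary 3 n hn0) (fun π' hp => unif_unique 3 n π' hp)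
  have d1 := (unif_isDist 1 n hn0)
  have d2 := (unif_isDist 2 n hn0)
  have d3 := (unif_isDist 3 n hn0)
  -- N = 1, i = j = k = 0
  have e1 : (1:ℝ) = c0 + c1 + c2 + c3 := by
    have := h1 0 0 0
    rw [phi3_iik, phi2_self _ d1] at this
    linarith
  -- N = 2, (i,j,k) = (0,0,1)
  have e2 : 1/t = c0 + c1 + c2 * (1/t) + c3 * (1/t) := by
    have := h2 0 0 1
    rw [phi3_iik, phi2_self _ d2, phi2_unif2 hn0] at this
    linarith
  -- N = 2, (i,j,k) = (0,1,0)
  have e3 : 1/t = c0 + c1 * (1/t) + c2 + c3 * (1/t) := by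
    have := h2 0 1 0
    rw [phi3_iji, phi2_self _ d2, phi2_symm (unif 2 n) 1 0, phi2_unif2 hn0] at this
    linarith
  -- N = 2, (i,j,k) = (0,1,1)
  have e4 : 1/t = c0 + c1 * (1/t) + c2 * (1/t) + c3 := by
    have := h2 0 1 1
    rw [phi3_ijj, phi2_self _ d2, phi2_unif2 hn0] at this
    linarith
  -- N = 3, (i,j,k) = (0,1,2)
  have e5 : 1/t^2 = c0 + c1 * (1/t) + c2 * (1/t) + c3 * (1/t) := by
    have := h3 0 1 2
    rw [phi3_unif3 hn0, phi2_unif3 hn0 0 1 (by decide), phi2_unif3 hn0 0 2 (by decide),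
      phi2_unif3 hn0 1 2 (by decide)] at this
    linarith
  -- derive the polynomial identity t² - 3t + 2 = 0, contradicting t ≥ 3
  have hkey : 3/t - 2/t^2 - 1 = 0 := by
    linear_combination e2 + e3 + e4 - 2*e5 - e1
  have ht0 : (0:ℝ) < t := by linarith
  have hpoly : t^2 - 3*t + 2 = 0 := by
    field_simp at hkey
    nlinarith [hkey]
  nlinarith [mul_nonneg (le_of_lt ht0) (by linarith : (0:ℝ) ≤ t - 3)]

end SCT
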